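/- Let n ≥ 1, let X and Y be finite index sets, let (ρ_x)_{x∈X} be n×n complex positive semidefinite matrices with trace 1, let (E_y)_{y∈Y} be n×n Hermitian matrices with 0 ⪯ E_y ⪯ I, and let λ ∈ ℝ. Define the sign matrix S ∈ {−1,+1}^{X×Y} by S_{x,y} = +1 if Tr(E_y ρ_x) > λ and S_{x,y} = −1 otherwise. Then the sign-rank of S is at most n². -/
import Mathlib


open scoped Matrix ComplexOrder

/-- The sign-rank of a real matrix `S` with `±1` entries: the minimum rank of a real
matrix `R` with `S_{x,y} · R_{x,y} > 0` for all entries. -/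
noncomputable def signRank {X Y : Type} [Fintype X] [Fintype Y] (S : Matrix X Y ℝ) : ℕ :=
  sInf {r | ∃ R : Matrix X Y ℝ, (∀ x y, 0 < S x y * R x y) ∧ R.rank = r}

/-- Inner-product representation of the real part of the trace of a product of
two Hermitian matrices. -/
lemma herm_trace_re (n : ℕ) (M N : Matrix (Fin n) (Fin n) ℂ)
    (hM : M.IsHermitian) (hN : N.IsHermitian) :
    ∑ p : Fin n × Fin n,
      ((M p.1 p.2).re + (M p.1 p.2).im) * ((N p.1 p.2).re + (N p.1 p.2).im)
      = (Matrix.trace (M * N)).re := by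
  have hNre : ∀ i j, (N j i).re = (N i j).re := by
    intro i j; rw [← hN.apply i j]; simp
  have hNim : ∀ i j, (N j i).im = -(N i j).im := by
    intro i j; rw [← hN.apply i j]; simp
  have hMre : ∀ i j, (M j i).re = (M i j).re := by
    intro i j; rw [← hM.apply i j]; simp
  have hMim : ∀ i j, (M j i).im = -(M i j).im := by
    intro i j; rw [← hM.apply i j]; simp
  have hcross : ∑ p : Fin n × Fin n,
      ((M p.1 p.2).re * (N p.1 p.2).im + (M p.1 p.2).im * (N p.1 p.2).re) = 0 := by
    have hswap : ∑ p : Fin n × Fin n,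
        ((M p.1 p.2).re * (N p.1 p.2).im + (M p.1 p.2).im * (N p.1 p.2).re)
        = ∑ p : Fin n × Fin n,
        (-((M p.1 p.2).re * (N p.1 p.2).im + (M p.1 p.2).im * (N p.1 p.2).re)) := by
      refine Fintype.sum_equiv (Equiv.prodComm (Fin n) (Fin n)) _ _ ?_
      intro p
      simp only [Equiv.prodComm_apply, Prod.fst_swap, Prod.snd_swap]
      rw [hMre p.1 p.2, hMim p.1 p.2, hNre p.1 p.2, hNim p.1 p.2]
      ring
    rw [Finset.sum_neg_distrib] at hswap
    linarith
  have htr : (Matrix.trace (M * N)).re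
      = ∑ p : Fin n × Fin n, ((M p.1 p.2).re * (N p.1 p.2).re
          + (M p.1 p.2).im * (N p.1 p.2).im) := by
    have h1 : Matrix.trace (M * N) = ∑ p : Fin n × Fin n, M p.1 p.2 * N p.2 p.1 := by
      rw [← Finset.univ_product_univ, Finset.sum_product]
      rw [Matrix.trace]
      simp [Matrix.diag, Matrix.mul_apply]
    rw [h1, Complex.re_sum]
    refine Finset.sum_congr rfl fun p _ => ?_
    rw [Complex.mul_re, hNre p.1 p.2, hNim p.1 p.2]
    ring
  have hsplit : ∑ p : Fin n × Fin n,
      ((M p.1 p.2).re + (M p.1 p.2).im) * ((N p.1 p.2).re + (N p.1 p.2).im)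
      = (∑ p : Fin n × Fin n, ((M p.1 p.2).re * (N p.1 p.2).re
          + (M p.1 p.2).im * (N p.1 p.2).im))
        + ∑ p : Fin n × Fin n,
          ((M p.1 p.2).re * (N p.1 p.2).im + (M p.1 p.2).im * (N p.1 p.2).re) := by
    rw [← Finset.sum_add_distrib]
    exact Finset.sum_congr rfl fun p _ => by ring
  rw [hsplit, hcross, add_zero, htr]

/-- the strict-cutpoint sign matrix of quantum acceptance probabilities
`Tr(E_y ρ_x)` for `n`-dimensional density matrices `ρ_x` and effects `E_y` has sign-rank
at most `n²`. -/
theorem quantum_signrank_bound (n : ℕ) (hn : 1 ≤ n) (X Y : Type) [Fintype X] [Fintype Y]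
    (ρ : X → Matrix (Fin n) (Fin n) ℂ)
    (hρ : ∀ x, (ρ x).PosSemidef ∧ (ρ x).trace = 1)
    (E : Y → Matrix (Fin n) (Fin n) ℂ)
    (hE : ∀ y, (E y).IsHermitian ∧ (E y).PosSemidef ∧
      ((1 : Matrix (Fin n) (Fin n) ℂ) - E y).PosSemidef)
    (lam : ℝ) :
    signRank (fun (x : X) (y : Y) =>
      if lam < (Matrix.trace (E y * ρ x)).re then (1 : ℝ) else -1) ≤ n ^ 2 := by
  classical
  set T : X → Y → ℝ := fun x y => (Matrix.trace (E y * ρ x)).re with hT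
  -- choose a margin ε
  obtain ⟨ε, hε, hεlt⟩ : ∃ ε : ℝ, 0 < ε ∧ ∀ x y, lam < T x y → lam + ε < T x y := by
    set P : Finset (X × Y) := Finset.univ.filter (fun p => lam < T p.1 p.2) with hP
    by_cases hne : P.Nonempty
    · refine ⟨P.inf' hne (fun p => T p.1 p.2 - lam) / 2, ?_, ?_⟩
      · have : 0 < P.inf' hne (fun p => T p.1 p.2 - lam) := by
          rw [Finset.lt_inf'_iff]
          intro p hp
          have := (Finset.mem_filter.mp hp).2
          linarith
        linarith
      · intro x y hxy
        have hmem : (x, y) ∈ P := by simp [hP, hxy]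
        have h1 : P.inf' hne (fun p => T p.1 p.2 - lam) ≤ T x y - lam :=
          Finset.inf'_le _ hmem
        have h2 : 0 < P.inf' hne (fun p => T p.1 p.2 - lam) := by
          rw [Finset.lt_inf'_iff]
          intro p hp
          have := (Finset.mem_filter.mp hp).2
          linarith
        linarith
    · refine ⟨1, one_pos, fun x y hxy => absurd ?_ hne⟩
      exact ⟨(x, y), by simp [hP, hxy]⟩
  set c : ℝ := lam + ε with hc
  set F : Y → Matrix (Fin n) (Fin n) ℂ := fun y => E y - (c : ℂ) • 1 with hF
  have hFherm : ∀ y, (F y).IsHermitian := by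
    intro y
    apply (hE y).1.sub
    unfold Matrix.IsHermitian
    rw [Matrix.conjTranspose_smul, Matrix.conjTranspose_one]
    simp [Complex.conj_ofReal]
  -- the representing matrices
  set A : Matrix X (Fin n × Fin n) ℝ :=
    fun x p => ((ρ x) p.1 p.2).re + ((ρ x) p.1 p.2).im with hA
  set B : Matrix (Fin n × Fin n) Y ℝ :=
    fun p y => ((F y) p.1 p.2).re + ((F y) p.1 p.2).im with hB
  set R : Matrix X Y ℝ := A * B with hR
  have hRval : ∀ x y, R x y = T x y - c := by
    intro x y
    have h1 : R x y = (Matrix.trace (ρ x * F y)).re := by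
      rw [hR, Matrix.mul_apply]
      exact herm_trace_re n (ρ x) (F y) (hρ x).1.isHermitian (hFherm y)
    rw [h1, Matrix.trace_mul_comm]
    have h2 : F y * ρ x = E y * ρ x - (c : ℂ) • ρ x := by
      rw [hF]
      simp [Matrix.sub_mul, Matrix.smul_mul]
    rw [h2, Matrix.trace_sub, Matrix.trace_smul, (hρ x).2]
    simp [hT]
  have hsign : ∀ x y,
      0 < (if lam < (Matrix.trace (E y * ρ x)).re then (1 : ℝ) else -1) * R x y := by
    intro x y
    rw [hRval x y]
    by_cases h : lam < T x y
    · rw [if_pos h, one_mul]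
      have := hεlt x y h
      simp only [hc]
      linarith
    · rw [if_neg h]
      push_neg at h
      have : T x y - c < 0 := by simp only [hc]; linarith
      nlinarith
  have hrank : R.rank ≤ n ^ 2 := by
    calc R.rank ≤ A.rank := Matrix.rank_mul_le_left A B
      _ ≤ Fintype.card (Fin n × Fin n) := Matrix.rank_le_card_width A
      _ = n ^ 2 := by simp [sq]
  exact le_trans (Nat.sInf_le ⟨R, hsign, rfl⟩) hrank
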